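/- Let G be a connected finite simple graph on N vertices in which every vertex has degree at most Δ, and let k, R be positive integers with N > 2k(Δ^{4R}+1). Let H be a k-local Hamiltonian of range R with respect to G such that for every 0 ≤ p ≤ N there is E_p ∈ ℂ with H |W^p⟩ = E_p |W^p⟩. Then there exist Ω, ω ∈ ℂ such that E_p = Ω + ω·p for all 0 ≤ p ≤ N. -/

import Mathlib

open scoped BigOperators
set_option linter.unusedSectionVars false

noncomputable section

/-- The state space of a collection of qubits indexed by `V`: the complex vector space of
functions from configurations `V → Bool` to `ℂ`. -/
abbrev QState (V : Type*) := (V → Bool) → ℂ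

section Defs

variable {V : Type*} [Fintype V] [DecidableEq V]

/-- The standard basis vector associated to the configuration `f`. -/
def basisVec (f : V → Bool) : QState V := fun g => if g = f then 1 else 0

/-- The creation operator `s†_i` at site `i`. -/
def creOp (i : V) : Module.End ℂ (QState V) where
  toFun ψ := fun g => if g i = true then ψ (Function.update g i false) else 0
  map_add' ψ φ := by funext g; by_cases h : g i = true <;> simp [h]
  map_smul' a ψ := by funext g; by_cases h : g i = true <;> simp [h]

/-- The annihilation operator `s_i` at site `i`. -/
def annOp (i : V) : Module.End ℂ (QState V) where
  toFun ψ := fun g => if g i = false then ψ (Function.update g i true) else 0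
  map_add' ψ φ := by funext g; by_cases h : g i = false <;> simp [h]
  map_smul' a ψ := by funext g; by_cases h : g i = false <;> simp [h]

@[simp] lemma creOp_apply (i : V) (ψ : QState V) (g : V → Bool) :
    creOp i ψ g = if g i = true then ψ (Function.update g i false) else 0 := rfl

variable (V)

/-- The vacuum `|0̄⟩`: the basis vector of the all-false configuration. -/
def vac : QState V := basisVec (fun _ => false)

/-- The total raising operator `S† = ∑ i, s†_i`. -/
def Sdag : Module.End ℂ (QState V) := ∑ i : V, creOp i

/-- The number operator `N̂ = ∑ i, s†_i s_i`. -/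
def numOp : Module.End ℂ (QState V) := ∑ i : V, creOp i * annOp i

/-- The unnormalized Dicke state `|W^p⟩ = (S†)^p |0̄⟩`. -/
def WState (p : ℕ) : QState V := ((Sdag V) ^ p) (vac V)

variable {V}

/-- Creation operators at different sites commute. -/
lemma creOp_commute (i j : V) : Commute (creOp (V := V) i) (creOp j) := by
  rcases eq_or_ne i j with rfl | hij
  · exact Commute.refl _
  · show creOp i * creOp j = creOp j * creOp i
    refine LinearMap.ext fun ψ => funext fun g => ?_
    simp only [Module.End.mul_apply, creOp_apply]
    by_cases hi : g i = true <;> by_cases hj : g j = true <;>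
      simp [hi, hj, Function.update_of_ne hij, Function.update_of_ne hij.symm,
        Function.update_comm hij]

/-- The product `∏_{j ∈ Y} s†_j` of creation operators over a finite set `Y` of sites
(the operators commute, so the product is well defined; the empty product is the identity). -/
def creProd (Y : Finset V) : Module.End ℂ (QState V) :=
  Y.noncommProd creOp fun a _ b _ _ => creOp_commute a b

/-- The operator `O` is supported on the set of sites `X`. -/
def SupportedOn (O : Module.End ℂ (QState V)) (X : Set V) : Prop :=
  (∀ f g : V → Bool, (∃ i ∉ X, f i ≠ g i) → O (basisVec f) g = 0) ∧
  (∀ f f' g g' : V → Bool,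
    (∀ i ∈ X, f i = f' i) → (∀ i ∈ X, g i = g' i) →
    (∀ i ∉ X, f i = g i) → (∀ i ∉ X, f' i = g' i) →
    O (basisVec f) g = O (basisVec f') g')

/-- An operator is `k`-local if it is a finite sum of operators each supported
on a subset of at most `k` sites. -/
def IsKLocal (k : ℕ) (O : Module.End ℂ (QState V)) : Prop :=
  ∃ (n : ℕ) (h : Fin n → Module.End ℂ (QState V)) (X : Fin n → Finset V),
    (∀ t, SupportedOn (h t) ↑(X t)) ∧ (∀ t, (X t).card ≤ k) ∧ O = ∑ t, h t

/-- Vertices `i` and `j` are within distance `r` in the graph `G`: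
they are joined by a walk of length at most `r`. -/
def WithinDist (G : SimpleGraph V) (r : ℕ) (i j : V) : Prop :=
  ∃ w : G.Walk i j, w.length ≤ r

/-- The ball of radius `r` around vertex `i` in the graph `G`. -/
def gball (G : SimpleGraph V) (i : V) (r : ℕ) : Set V := {j | WithinDist G r i j}

/-- `diam(X) ≤ R` with respect to `G`: every two vertices of `X` are within distance `R - 1`. -/
def GDiamLE (G : SimpleGraph V) (X : Finset V) (R : ℕ) : Prop :=
  ∀ i ∈ X, ∀ j ∈ X, WithinDist G (R - 1) i j

/-- `H` is a Hamiltonian of range `R` with respect to the graph `G`: a finite sum over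
nonempty subsets `X` with `diam(X) ≤ R` of operators supported on `X`. -/
def IsRangeHam (G : SimpleGraph V) (R : ℕ) (H : Module.End ℂ (QState V)) : Prop :=
  ∃ h : Finset V → Module.End ℂ (QState V),
    (∀ X, SupportedOn (h X) ↑X) ∧
    (∀ X, h X ≠ 0 → X.Nonempty ∧ GDiamLE G X R) ∧
    H = ∑ X : Finset V, h X

/-- `H` is a `k`-local Hamiltonian of range `R` with respect to the graph `G`. -/
def IsKLocalRangeHam (G : SimpleGraph V) (k R : ℕ) (H : Module.End ℂ (QState V)) : Prop :=
  ∃ h : Finset V → Module.End ℂ (QState V),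
    (∀ X, SupportedOn (h X) ↑X) ∧
    (∀ X, h X ≠ 0 → X.Nonempty ∧ GDiamLE G X R ∧ X.card ≤ k) ∧
    H = ∑ X : Finset V, h X

/-- An invertible linear operator `M` is `δ`-locality-preserving with respect to `G` if
conjugation by `M` or `M⁻¹` increases the range of any operator by at most `δ`. -/
def LocalityPreserving (G : SimpleGraph V) (δ : ℕ) (M : QState V ≃ₗ[ℂ] QState V) : Prop :=
  ∀ R : ℕ, 0 < R → ∀ O : Module.End ℂ (QState V), IsRangeHam G R O →
    IsRangeHam G (R + δ) (M.toLinearMap ∘ₗ O ∘ₗ M.symm.toLinearMap) ∧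
    IsRangeHam G (R + δ) (M.symm.toLinearMap ∘ₗ O ∘ₗ M.toLinearMap)

end Defs

section Chain

/-- Distance between two sites of the open chain `{0, …, N-1}`. -/
def chainDist {N : ℕ} (i j : Fin N) : ℕ := ((i : ℤ) - (j : ℤ)).natAbs

/-- `diam(X) ≤ R` on the open chain: `diam(X) = 1 + max |i - j|`. -/
def ChainDiamLE {N : ℕ} (X : Finset (Fin N)) (R : ℕ) : Prop :=
  ∀ i ∈ X, ∀ j ∈ X, chainDist i j + 1 ≤ R

/-- `H` is a Hamiltonian of range `R` on the open chain of `N` sites. -/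
def IsChainRangeHam {N : ℕ} (R : ℕ) (H : Module.End ℂ (QState (Fin N))) : Prop :=
  ∃ h : Finset (Fin N) → Module.End ℂ (QState (Fin N)),
    (∀ X, SupportedOn (h X) ↑X) ∧
    (∀ X, h X ≠ 0 → X.Nonempty ∧ ChainDiamLE X R) ∧
    H = ∑ X : Finset (Fin N), h X

/-- `H` is a `k`-local Hamiltonian of range `R` on the open chain of `N` sites. -/
def IsChainKLocalRangeHam {N : ℕ} (k R : ℕ) (H : Module.End ℂ (QState (Fin N))) : Prop :=
  ∃ h : Finset (Fin N) → Module.End ℂ (QState (Fin N)),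
    (∀ X, SupportedOn (h X) ↑X) ∧
    (∀ X, h X ≠ 0 → X.Nonempty ∧ ChainDiamLE X R ∧ X.card ≤ k) ∧
    H = ∑ X : Finset (Fin N), h X

end Chain

end

set_option maxHeartbeats 1000000

noncomputable section AuxSpacing
open Finset
open scoped Classical
variable {V : Type*} [Fintype V] [DecidableEq V]

def cfg (T : Finset V) : V → Bool := fun v => decide (v ∈ T)

@[simp] lemma cfg_eq_true {T : Finset V} {v : V} : cfg T v = true ↔ v ∈ T := by simp [cfg]

lemma cfg_bijective : Function.Bijective (cfg (V := V)) := by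
  constructor
  · intro T T' h
    ext v
    have := congrFun h v
    simpa [cfg] using this
  · intro f
    refine ⟨univ.filter (fun v => f v = true), ?_⟩
    funext v
    cases hv : f v <;> simp [cfg, hv]

@[simp] lemma filter_cfg (T : Finset V) :
    univ.filter (fun v => cfg T v = true) = T := by ext v; simp

lemma sum_config {M : Type*} [AddCommMonoid M] (φ : (V → Bool) → M) :
    ∑ f : V → Bool, φ f = ∑ T : Finset V, φ (cfg T) := by
  exact (Fintype.sum_bijective cfg cfg_bijective _ _ (fun T => rfl)).symm

lemma end_apply_eq_sum (O : Module.End ℂ (QState V)) (ψ : QState V) (g : V → Bool) :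
    O ψ g = ∑ f : V → Bool, ψ f * O (basisVec f) g := by
  have hψ : ψ = ∑ f : V → Bool, ψ f • basisVec f := by
    funext x
    rw [Finset.sum_apply]
    simp [basisVec]
  conv_lhs => rw [hψ, map_sum]
  rw [Finset.sum_apply]
  simp [basisVec]

def cnt (g : V → Bool) : ℕ := (univ.filter (fun v => g v = true)).card

lemma filter_update_false (g : V → Bool) (i : V) :
    univ.filter (fun v => Function.update g i false v = true)
      = (univ.filter (fun v => g v = true)).erase i := by
  ext v
  rcases eq_or_ne v i with rfl | hv
  · simp [Function.update]
  · simp [Function.update_of_ne hv, hv]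

lemma cnt_update_false (g : V → Bool) (i : V) (hi : g i = true) :
    cnt (Function.update g i false) = cnt g - 1 := by
  rw [cnt, filter_update_false, card_erase_of_mem]
  · rfl
  · simp [hi]

lemma sdag_apply (ψ : QState V) (g : V → Bool) :
    Sdag V ψ g = ∑ i : V, if g i = true then ψ (Function.update g i false) else 0 := by
  rw [Sdag, LinearMap.sum_apply, Finset.sum_apply]
  simp

lemma wstate_apply (p : ℕ) (g : V → Bool) :
    WState V p g = if cnt g = p then (p.factorial : ℂ) else 0 := by
  induction p generalizing g with
  | zero =>
    have : cnt g = 0 ↔ g = (fun _ => false) := by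
      constructor
      · intro h
        funext v
        have := Finset.card_eq_zero.mp h
        by_contra hv
        have hv' : g v = true := by
          cases hgv : g v
          · exact absurd (by simp [hgv]) hv
          · rfl
        have : v ∈ univ.filter (fun v => g v = true) := by simp [hv']
        simp [Finset.card_eq_zero.mp h] at this
      · intro h; subst h; simp [cnt]
    rcases eq_or_ne (cnt g) 0 with h0 | h0
    · rw [this.mp h0]
      simp [WState, vac, basisVec, cnt]
    · have : g ≠ (fun _ => false) := fun hg => h0 (this.mpr hg)
      simp [WState, vac, basisVec, h0, this]
  | succ p ih =>
    have hW : WState V (p+1) = Sdag V (WState V p) := by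
      rw [WState, WState, pow_succ']
      rfl
    rw [hW, sdag_apply]
    rcases eq_or_ne (cnt g) (p+1) with hg | hg
    · have hterm : ∀ i : V, (if g i = true then WState V p (Function.update g i false) else 0)
          = if g i = true then (p.factorial : ℂ) else 0 := by
        intro i
        rcases hgi : g i with hf | ht
        · simp [hgi]
        · simp only [hgi, if_true]
          rw [ih, cnt_update_false g i hgi, hg]
          simp
      rw [Finset.sum_congr rfl (fun i _ => hterm i), ← Finset.sum_filter]
      rw [Finset.sum_const]
      have : (univ.filter (fun v => g v = true)).card = p + 1 := hg
      rw [this, if_pos hg, nsmul_eq_mul, Nat.factorial_succ]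
      push_cast
      ring
    · have hterm : ∀ i : V, (if g i = true then WState V p (Function.update g i false) else 0) = 0 := by
        intro i
        rcases hgi : g i with hf | ht
        · simp [hgi]
        · simp only [hgi, if_true]
          rw [ih, cnt_update_false g i hgi]
          have hpos : 0 < cnt g := by
            rw [cnt, Finset.card_pos]
            exact ⟨i, by simp [hgi]⟩
          have : cnt g - 1 ≠ p := by omega
          simp [this]
      simp [hterm, hg]

lemma supported_apply (hX : Module.End ℂ (QState V)) (X : Finset V)
    (hs : SupportedOn hX ↑X) (S : Finset V) :
    (hX (WState V S.card)) (cfg S)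
      = (S.card.factorial : ℂ) *
        ∑ A ∈ X.powerset.filter (fun A => A.card = (S ∩ X).card),
          hX (basisVec (cfg A)) (cfg (S ∩ X)) := by
  set p := S.card with hp
  rw [end_apply_eq_sum, sum_config]
  have h1 : ∀ T : Finset V, WState V p (cfg T) * hX (basisVec (cfg T)) (cfg S)
      = if T.card = p then (p.factorial : ℂ) * hX (basisVec (cfg T)) (cfg S) else 0 := by
    intro T
    rw [wstate_apply]
    have hc : cnt (cfg T) = T.card := by rw [cnt]; simp
    rw [hc]
    split <;> simp
  rw [Finset.sum_congr rfl (fun T _ => h1 T), ← Finset.sum_filter]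
  have hvan : ∀ T ∈ univ.filter (fun T : Finset V => T.card = p),
      (p.factorial : ℂ) * hX (basisVec (cfg T)) (cfg S) ≠ 0 → T \ X = S \ X := by
    intro T _ hne
    by_contra hq
    apply hne
    have hex : ∃ v, ¬ (v ∈ T \ X ↔ v ∈ S \ X) := by
      by_contra hall
      push_neg at hall
      exact hq (Finset.ext fun v => hall v)
    obtain ⟨v, hv⟩ := hex
    have hvx : v ∉ X ∧ cfg T v ≠ cfg S v := by
      rcases em (v ∈ T \ X) with h | h
      · have h2 : v ∉ S \ X := fun h2 => hv ⟨fun _ => h2, fun _ => h⟩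
        rw [Finset.mem_sdiff] at h h2
        push_neg at h2
        refine ⟨h.2, ?_⟩
        have : v ∉ S := fun hvS => h.2 (h2 hvS)
        simp [cfg, h.1, this]
      · have h2 : v ∈ S \ X := by
          by_contra h2
          exact hv ⟨fun h' => absurd h' h, fun h' => absurd h' h2⟩
        rw [Finset.mem_sdiff] at h h2
        push_neg at h
        refine ⟨h2.2, ?_⟩
        have : v ∉ T := fun hvT => h2.2 (h hvT)
        simp [cfg, h2.1, this]
    have := hs.1 (cfg T) (cfg S) ⟨v, by simpa using hvx.1, hvx.2⟩
    rw [this, mul_zero]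
  rw [← Finset.sum_filter_of_ne hvan, Finset.filter_filter]
  have hbij : ∑ T ∈ univ.filter (fun T : Finset V => T.card = p ∧ T \ X = S \ X),
      (p.factorial : ℂ) * hX (basisVec (cfg T)) (cfg S)
      = ∑ A ∈ X.powerset.filter (fun A => A.card = (S ∩ X).card),
      (p.factorial : ℂ) * hX (basisVec (cfg A)) (cfg (S ∩ X)) := by
    refine Finset.sum_nbij' (fun T => T ∩ X) (fun A => A ∪ (S \ X)) ?_ ?_ ?_ ?_ ?_
    · intro T hT
      simp only [Finset.mem_filter, Finset.mem_univ, true_and] at hT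
      simp only [Finset.mem_filter, Finset.mem_powerset]
      refine ⟨Finset.inter_subset_right, ?_⟩
      have e1 := Finset.card_inter_add_card_sdiff T X
      have e2 := Finset.card_inter_add_card_sdiff S X
      rw [hT.2] at e1
      omega
    · intro A hA
      simp only [Finset.mem_filter, Finset.mem_powerset] at hA
      simp only [Finset.mem_filter, Finset.mem_univ, true_and]
      have hdisj : Disjoint A (S \ X) :=
        Finset.disjoint_left.mpr fun a haA haS => (Finset.mem_sdiff.mp haS).2 (hA.1 haA)
      constructor
      · rw [Finset.card_union_of_disjoint hdisj, hA.2]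
        have := Finset.card_inter_add_card_sdiff S X
        omega
      · ext v
        simp only [Finset.mem_sdiff, Finset.mem_union]
        constructor
        · rintro ⟨h1 | h1, h2⟩
          · exact absurd (hA.1 h1) h2
          · exact h1
        · intro h1
          exact ⟨Or.inr h1, h1.2⟩
    · intro T hT
      simp only [Finset.mem_filter, Finset.mem_univ, true_and] at hT
      rw [← hT.2]
      ext v
      simp only [Finset.mem_union, Finset.mem_inter, Finset.mem_sdiff]
      tauto
    · intro A hA
      simp only [Finset.mem_filter, Finset.mem_powerset] at hA
      ext v
      simp only [Finset.mem_inter, Finset.mem_union, Finset.mem_sdiff]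
      constructor
      · rintro ⟨h1 | h1, h2⟩
        · exact h1
        · exact absurd h2 h1.2
      · intro h1
        exact ⟨Or.inl h1, hA.1 h1⟩
    · intro T hT
      simp only [Finset.mem_filter, Finset.mem_univ, true_and] at hT
      congr 1
      apply hs.2 (cfg T) (cfg (T ∩ X)) (cfg S) (cfg (S ∩ X))
      · intro i hi
        simp only [Finset.coe_sort_coe, Finset.mem_coe] at hi
        simp [cfg, Finset.mem_inter, hi]
      · intro i hi
        simp only [Finset.mem_coe] at hi
        simp [cfg, Finset.mem_inter, hi]
      · intro i hi
        simp only [Finset.mem_coe] at hi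
        have h1 : (i ∈ T) = (i ∈ S) := by
          have := hT.2
          by_cases hiT : i ∈ T
          · have : i ∈ S \ X := hT.2 ▸ Finset.mem_sdiff.mpr ⟨hiT, hi⟩
            simp [hiT, (Finset.mem_sdiff.mp this).1]
          · have : i ∉ S := by
              intro hiS
              have : i ∈ T \ X := hT.2.symm ▸ Finset.mem_sdiff.mpr ⟨hiS, hi⟩
              exact hiT (Finset.mem_sdiff.mp this).1
            simp [hiT, this]
        simp [cfg, h1]
      · intro i hi
        simp only [Finset.mem_coe] at hi
        have h1 : i ∉ T ∩ X := fun h => hi (Finset.mem_inter.mp h).2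
        have h2 : i ∉ S ∩ X := fun h => hi (Finset.mem_inter.mp h).2
        simp [cfg, h1, h2]
  rw [hbij, Finset.mul_sum]

open Classical in
def gballF (G : SimpleGraph V) (r : ℕ) (j : V) : Finset V :=
  univ.filter (fun v => WithinDist G r j v)

open Classical in
lemma mem_gballF {G : SimpleGraph V} {r : ℕ} {j v : V} :
    v ∈ gballF G r j ↔ WithinDist G r j v := by
  simp [gballF]

lemma mem_gballF_self {G : SimpleGraph V} {r : ℕ} {j : V} : j ∈ gballF G r j :=
  mem_gballF.mpr ⟨SimpleGraph.Walk.nil, by simp⟩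

lemma gballF_mono {G : SimpleGraph V} {r r' : ℕ} (h : r ≤ r') (j : V) :
    gballF G r j ⊆ gballF G r' j := by
  intro v hv
  obtain ⟨w, hw⟩ := mem_gballF.mp hv
  exact mem_gballF.mpr ⟨w, hw.trans h⟩

lemma neighborFinset_card_le {G : SimpleGraph V} {Δ : ℕ}
    (hdeg : ∀ v : V, (G.neighborSet v).ncard ≤ Δ) (v : V) :
    (G.neighborFinset v).card ≤ Δ := by
  have := hdeg v
  rwa [Set.ncard_eq_toFinset_card'] at this

lemma gballF_card_le {G : SimpleGraph V} {Δ : ℕ}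
    (hdeg : ∀ v : V, (G.neighborSet v).ncard ≤ Δ) (r : ℕ) (j : V) :
    (gballF G r j).card ≤ (Δ + 1) ^ r := by
  induction r generalizing j with
  | zero =>
    have hsub : gballF G 0 j ⊆ {j} := by
      intro v hv
      obtain ⟨w, hw⟩ := mem_gballF.mp hv
      have : w.length = 0 := Nat.le_zero.mp hw
      have := SimpleGraph.Walk.eq_of_length_eq_zero this
      simp [this]
    simpa using Finset.card_le_card hsub
  | succ r ih =>
    have hsub : gballF G (r+1) j ⊆
        insert j ((G.neighborFinset j).biUnion (fun u => gballF G r u)) := by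
      intro v hv
      obtain ⟨w, hw⟩ := mem_gballF.mp hv
      cases w with
      | nil => simp
      | cons hadj p =>
        rw [Finset.mem_insert]
        right
        rw [Finset.mem_biUnion]
        exact ⟨_, (SimpleGraph.mem_neighborFinset _ _ _).mpr hadj,
          mem_gballF.mpr ⟨p, by simpa using Nat.succ_le_succ_iff.mp hw⟩⟩
    calc (gballF G (r+1) j).card ≤ _ := Finset.card_le_card hsub
      _ ≤ 1 + ((G.neighborFinset j).biUnion (fun u => gballF G r u)).card := by
          have := Finset.card_insert_le j ((G.neighborFinset j).biUnion (fun u => gballF G r u))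
          omega
      _ ≤ 1 + ∑ u ∈ G.neighborFinset j, (gballF G r u).card := by
          exact Nat.add_le_add_left (Finset.card_biUnion_le) 1
      _ ≤ 1 + ∑ u ∈ G.neighborFinset j, (Δ + 1) ^ r := by
          exact Nat.add_le_add_left (Finset.sum_le_sum fun u _ => ih u) 1
      _ ≤ 1 + Δ * (Δ + 1) ^ r := by
          rw [Finset.sum_const, smul_eq_mul]
          exact Nat.add_le_add_left
            (Nat.mul_le_mul_right _ (neighborFinset_card_le hdeg j)) 1
      _ ≤ (Δ + 1) ^ (r + 1) := by
          rw [pow_succ]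
          nlinarith [Nat.one_le_pow r (Δ+1) (Nat.succ_pos Δ)]

lemma walk_end_of_deg_le_one {G : SimpleGraph V}
    (hdeg : ∀ v : V, (G.neighborSet v).ncard ≤ 1) :
    ∀ {u v : V} (_ : G.Walk u v), v = u ∨ G.Adj u v := by
  intro u v w
  induction w with
  | nil => exact Or.inl rfl
  | @cons a x z hadj p ih =>
    rcases ih with rfl | h
    · exact Or.inr hadj
    · have h1 : a ∈ G.neighborSet x := by rw [SimpleGraph.mem_neighborSet]; exact hadj.symm
      have h2 : z ∈ G.neighborSet x := by rw [SimpleGraph.mem_neighborSet]; exact h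
      have := (Set.ncard_le_one (Set.toFinite _)).mp (hdeg x) a h1 z h2
      exact Or.inl this.symm

lemma card_le_two_of_deg_le_one {G : SimpleGraph V} (hconn : G.Connected)
    (hdeg : ∀ v : V, (G.neighborSet v).ncard ≤ 1) :
    Fintype.card V ≤ 2 := by
  have hne : Nonempty V := hconn.nonempty
  obtain ⟨a⟩ := hne
  have hsub : (univ : Finset V) ⊆ insert a (G.neighborFinset a) := by
    intro v _
    have hr : G.Reachable a v := hconn.preconnected a v
    obtain ⟨w⟩ := hr
    rcases walk_end_of_deg_le_one hdeg w with rfl | h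
    · simp
    · exact Finset.mem_insert.mpr (Or.inr ((SimpleGraph.mem_neighborFinset _ _ _).mpr h))
  calc Fintype.card V = (univ : Finset V).card := (Finset.card_univ).symm
    _ ≤ (insert a (G.neighborFinset a)).card := Finset.card_le_card hsub
    _ ≤ 1 + (G.neighborFinset a).card := by
        have := Finset.card_insert_le a (G.neighborFinset a); omega
    _ ≤ 1 + 1 := Nat.add_le_add_left (neighborFinset_card_le hdeg a) 1
    _ = 2 := rfl

end AuxSpacing

open Finset in
/-- Equal spacing of the Dicke tower on a connected bounded-degree graph for
k-local Hamiltonians of range R, when N > 2k(Δ^{4R}+1). -/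
theorem dicke_tower_equal_spacing_graph
    {V : Type*} [Fintype V] [DecidableEq V]
    (G : SimpleGraph V) (hconn : G.Connected)
    (Δ : ℕ) (hdeg : ∀ v : V, (G.neighborSet v).ncard ≤ Δ)
    (k R : ℕ) (hk : 0 < k) (hR : 0 < R)
    (hbig : 2 * k * (Δ ^ (4 * R) + 1) < Fintype.card V)
    (H : Module.End ℂ (QState V)) (hH : IsKLocalRangeHam G k R H)
    (E : ℕ → ℂ)
    (hE : ∀ p ≤ Fintype.card V, H (WState V p) = E p • WState V p) :
    ∃ Ω ω : ℂ, ∀ p ≤ Fintype.card V, E p = Ω + ω * p := by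
  classical
  obtain ⟨h, hsupp, hloc, hHsum⟩ := hH
  set N := Fintype.card V with hN
  set b := Δ ^ (4 * R) + 1 with hb
  have h2b : 2 * b < N := by
    have : 2 * b ≤ 2 * k * b := Nat.mul_le_mul (by omega) (le_refl b)
    omega
  -- eliminate Δ ≤ 1
  have hΔ2 : 2 ≤ Δ := by
    by_contra hΔ
    push_neg at hΔ
    have hd1 : ∀ v, (G.neighborSet v).ncard ≤ 1 := fun v => le_trans (hdeg v) (by omega)
    have h2 := card_le_two_of_deg_le_one hconn hd1
    have hb1 : 1 ≤ b := by omega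
    omega
  have hΔ1 : 1 ≤ Δ := by omega
  -- the key function F
  have hFE : ∀ S : Finset V, (∑ X : Finset V,
      ∑ A ∈ X.powerset.filter (fun A => A.card = (S ∩ X).card),
        (h X) (basisVec (cfg A)) (cfg (S ∩ X))) = E S.card := by
    intro S
    have hcard : S.card ≤ N := by
      have := Finset.card_le_card (Finset.subset_univ S)
      rwa [Finset.card_univ] at this
    have heig := congrFun (hE S.card hcard) (cfg S)
    rw [hHsum, LinearMap.sum_apply, Finset.sum_apply] at heig
    rw [Finset.sum_congr rfl (fun X _ => supported_apply (h X) X (hsupp X) S),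
      ← Finset.mul_sum] at heig
    have hR2 : (E S.card • WState V S.card) (cfg S) = E S.card * (S.card.factorial : ℂ) := by
      rw [Pi.smul_apply, wstate_apply]
      have hc : cnt (cfg S) = S.card := by rw [cnt]; simp
      rw [hc, if_pos rfl, smul_eq_mul]
    rw [hR2] at heig
    have hfac : ((S.card.factorial : ℕ) : ℂ) ≠ 0 :=
      Nat.cast_ne_zero.mpr (Nat.factorial_ne_zero _)
    have := mul_left_cancel₀ hfac (heig.trans (mul_comm _ _))
    exact this
  set F : Finset V → ℂ := fun S => ∑ X : Finset V,
      ∑ A ∈ X.powerset.filter (fun A => A.card = (S ∩ X).card),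
        (h X) (basisVec (cfg A)) (cfg (S ∩ X)) with hFdef
  -- balls
  set Bf : V → Finset V := fun j => gballF G (R - 1) j with hBf
  have hBfb : ∀ j, (Bf j).card ≤ b := by
    intro j
    have h1 : (Bf j).card ≤ (Δ + 1) ^ (R - 1) := gballF_card_le hdeg _ j
    have h2 : (Δ + 1) ^ (R - 1) ≤ (Δ ^ 2) ^ (R - 1) := by
      apply Nat.pow_le_pow_left
      nlinarith
    have h3 : (Δ ^ 2) ^ (R - 1) ≤ Δ ^ (4 * R) := by
      rw [← pow_mul]
      exact Nat.pow_le_pow_right hΔ1 (by omega)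
    omega
  have hBigb : ∀ j, (gballF G (2 * (R - 1)) j).card ≤ b := by
    intro j
    have h1 : (gballF G (2 * (R - 1)) j).card ≤ (Δ + 1) ^ (2 * (R - 1)) :=
      gballF_card_le hdeg _ j
    have h2 : (Δ + 1) ^ (2 * (R - 1)) ≤ (Δ ^ 2) ^ (2 * (R - 1)) := by
      apply Nat.pow_le_pow_left
      nlinarith
    have h3 : (Δ ^ 2) ^ (2 * (R - 1)) ≤ Δ ^ (4 * R) := by
      rw [← pow_mul]
      exact Nat.pow_le_pow_right hΔ1 (by omega)
    omega
  -- the difference lemma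
  have hdiff : ∀ (S S' : Finset V) (j : V), j ∉ S → j ∉ S' → S ∩ Bf j = S' ∩ Bf j →
      E (S.card + 1) - E S.card = E (S'.card + 1) - E S'.card := by
    intro S S' j hjS hjS' hSS
    have key : F (insert j S) - F S = F (insert j S') - F S' := by
      simp only [hFdef]
      rw [← Finset.sum_sub_distrib, ← Finset.sum_sub_distrib]
      apply Finset.sum_congr rfl
      intro X _
      by_cases hX0 : h X = 0
      · simp [hX0]
      · obtain ⟨hne, hdiam, hcardX⟩ := hloc X hX0
        by_cases hjX : j ∈ X
        · have hXB : X ⊆ Bf j := by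
            intro x hx
            exact mem_gballF.mpr (hdiam j hjX x hx)
          have h3 : S ∩ X = S' ∩ X := by
            ext v
            have hv := Finset.ext_iff.mp hSS v
            simp only [Finset.mem_inter] at hv ⊢
            constructor
            · intro ⟨h4, h5⟩
              exact ⟨(hv.mp ⟨h4, hXB h5⟩).1, h5⟩
            · intro ⟨h4, h5⟩
              exact ⟨(hv.mpr ⟨h4, hXB h5⟩).1, h5⟩
          rw [Finset.insert_inter_of_mem hjX, Finset.insert_inter_of_mem hjX, h3]
        · rw [Finset.insert_inter_of_notMem hjX, Finset.insert_inter_of_notMem hjX]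
          simp
    have e1 : F (insert j S) = E (S.card + 1) := by
      have := hFE (insert j S)
      rw [Finset.card_insert_of_notMem hjS] at this
      exact this
    have e2 : F (insert j S') = E (S'.card + 1) := by
      have := hFE (insert j S')
      rw [Finset.card_insert_of_notMem hjS'] at this
      exact this
    have e3 : F S = E S.card := hFE S
    have e4 : F S' = E S'.card := hFE S'
    rw [e1, e2, e3, e4] at key
    exact key
  -- membership basics
  have hmemBf : ∀ j, j ∈ Bf j := fun j => mem_gballF_self
  -- empty-ball lemma
  have hEmpty : ∀ (j : V) (S : Finset V), S ∩ Bf j = ∅ →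
      E (S.card + 1) - E S.card = E 1 - E 0 := by
    intro j S hS
    have hjS : j ∉ S := by
      intro hj
      have : j ∈ S ∩ Bf j := Finset.mem_inter.mpr ⟨hj, hmemBf j⟩
      rw [hS] at this
      exact absurd this (Finset.notMem_empty j)
    have := hdiff S ∅ j hjS (Finset.notMem_empty j) (by rw [hS, Finset.empty_inter])
    simpa using this
  -- nonempty V, choose j1 far j2
  have hNpos : 0 < N := by omega
  have hneV : Nonempty V := by
    rw [← Fintype.card_pos_iff]
    omega
  obtain ⟨j1⟩ := hneV
  have hj2ex : ∃ j2 : V, ¬ WithinDist G (2 * (R - 1)) j1 j2 := by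
    by_contra hall
    push_neg at hall
    have : (univ : Finset V) ⊆ gballF G (2 * (R - 1)) j1 := by
      intro v _
      exact mem_gballF.mpr (hall v)
    have := Finset.card_le_card this
    rw [Finset.card_univ, ← hN] at this
    have := hBigb j1
    omega
  obtain ⟨j2, hj2⟩ := hj2ex
  have hdisj : ∀ v, v ∈ Bf j1 → v ∈ Bf j2 → False := by
    intro v h1 h2
    obtain ⟨w1, hw1⟩ := mem_gballF.mp h1
    obtain ⟨w2, hw2⟩ := mem_gballF.mp h2
    apply hj2
    refine ⟨w1.append w2.reverse, ?_⟩
    rw [SimpleGraph.Walk.length_append, SimpleGraph.Walk.length_reverse]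
    omega
  -- full-ball base
  set S₀ : Finset V := (Bf j1).erase j1 with hS₀
  have hS₀card : S₀.card = (Bf j1).card - 1 := Finset.card_erase_of_mem (hmemBf j1)
  have hbase : E (S₀.card + 1) - E S₀.card = E 1 - E 0 := by
    apply hEmpty j2
    ext v
    simp only [Finset.mem_inter, Finset.notMem_empty, iff_false, not_and]
    intro hv1 hv2
    exact hdisj v (Finset.erase_subset _ _ hv1) hv2
  have hFull : ∀ S : Finset V, j1 ∉ S → (Bf j1).erase j1 ⊆ S →
      E (S.card + 1) - E S.card = E 1 - E 0 := by
    intro S hjS hsub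
    have hinter : S ∩ Bf j1 = S₀ ∩ Bf j1 := by
      ext v
      simp only [Finset.mem_inter, hS₀, Finset.mem_erase]
      constructor
      · intro ⟨h1, h2⟩
        have hvne : v ≠ j1 := fun hv => hjS (hv ▸ h1)
        exact ⟨⟨hvne, h2⟩, h2⟩
      · intro ⟨⟨h1, h2⟩, h3⟩
        exact ⟨hsub (Finset.mem_erase.mpr ⟨h1, h2⟩), h3⟩
    have := hdiff S S₀ j1 hjS (Finset.notMem_erase j1 _) hinter
    rw [this]
    exact hbase
  -- the main step
  have hstep : ∀ p, p < N → E (p + 1) - E p = E 1 - E 0 := by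
    intro p hp
    by_cases hcase : p + (Bf j1).card ≤ N
    · -- empty ball config
      have havail : p ≤ (univ \ Bf j1).card := by
        rw [Finset.card_sdiff_of_subset (Finset.subset_univ _), Finset.card_univ, ← hN]
        omega
      obtain ⟨S, hSsub, hScard⟩ := Finset.exists_subset_card_eq havail
      have hSint : S ∩ Bf j1 = ∅ := by
        ext v
        simp only [Finset.mem_inter, Finset.notMem_empty, iff_false, not_and]
        intro hv1 hv2
        exact (Finset.mem_sdiff.mp (hSsub hv1)).2 hv2
      have := hEmpty j1 S hSint
      rw [hScard] at this
      exact this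
    · -- full ball config
      push_neg at hcase
      have hB1 := hBfb j1
      have hBpos : 0 < (Bf j1).card := Finset.card_pos.mpr ⟨j1, hmemBf j1⟩
      have havail : p - S₀.card ≤ (univ \ Bf j1).card := by
        rw [Finset.card_sdiff_of_subset (Finset.subset_univ _), Finset.card_univ, ← hN]
        omega
      obtain ⟨T, hTsub, hTcard⟩ := Finset.exists_subset_card_eq havail
      have hTint : ∀ v ∈ T, v ∉ Bf j1 := fun v hv => (Finset.mem_sdiff.mp (hTsub hv)).2
      have hdisjST : Disjoint S₀ T := by
        rw [Finset.disjoint_left]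
        intro a ha haT
        exact hTint a haT (Finset.erase_subset _ _ ha)
      set S : Finset V := S₀ ∪ T with hS
      have hScard : S.card = p := by
        rw [hS, Finset.card_union_of_disjoint hdisjST, hTcard, hS₀card]
        omega
      have hjS : j1 ∉ S := by
        rw [hS, Finset.mem_union]
        rintro (h1 | h1)
        · exact Finset.notMem_erase j1 _ h1
        · exact hTint j1 h1 (hmemBf j1)
      have hsub : (Bf j1).erase j1 ⊆ S := Finset.subset_union_left
      have := hFull S hjS hsub
      rw [hScard] at this
      exact this
  -- conclude
  refine ⟨E 0, E 1 - E 0, ?_⟩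
  intro p hp
  induction p with
  | zero => simp
  | succ q ih =>
    have hq : q ≤ N := by omega
    have hqN : q < N := by omega
    have := hstep q hqN
    have ihq := ih hq
    push_cast
    rw [sub_eq_iff_eq_add] at this
    rw [this, ihq]
    ring
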